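/- Fix integers d ≥ 2 and k ≥ 1, a real number p, and a unit vector ψ ∈ ℂ^d. Suppose (S, S_ch) is a parallel k-call probabilistic protocol with S ⋆ U^{⊗k} = p · Uᵀ|ψ⟩⟨ψ|U̅ for all U ∈ SU(d). Then there exists a parallel k-call probabilistic protocol (S^c, S^c_ch) with S^c ⋆ U^{⊗k} = p · Uᵀ|ψ⟩⟨ψ|U̅ for all U ∈ SU(d) such that S^c commutes with U^{⊗k} ⊗ 1_O ⊗ U̅ for every U ∈ SU(d) (U^{⊗k} acting on the I factors, the identity on the O factors, and U̅ on the F factor). Hence, without loss of performance, probabilistic exact unitary transposition on a known pure state can be realized by a covariant protocol. -/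

import Mathlib

open Matrix Kronecker BigOperators ComplexOrder

noncomputable section

/-- Entrywise complex conjugate `U̅` of a matrix. -/
def mconj {d : ℕ} (U : Matrix (Fin d) (Fin d) ℂ) : Matrix (Fin d) (Fin d) ℂ :=
  U.map (starRingEnd ℂ)

/-- Rank-one outer product `|v⟩⟨v|`. -/
def outer {n : Type*} (v : n → ℂ) : Matrix n n ℂ :=
  Matrix.vecMulVec v (star v)

/-- Choi vector `|U⟩⟩ = Σ_i e_i ⊗ U e_i`. -/
def choiVec {d : ℕ} (U : Matrix (Fin d) (Fin d) ℂ) : Fin d × Fin d → ℂ :=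
  fun p => U p.2 p.1

/-- `|U⟩⟩⟨⟨U|`. -/
def choiProj {d : ℕ} (U : Matrix (Fin d) (Fin d) ℂ) :
    Matrix (Fin d × Fin d) (Fin d × Fin d) ℂ :=
  outer (choiVec U)

/-- Partial trace over the first tensor factor. -/
def ptrLeft {α β : Type*} [Fintype α] (S : Matrix (α × β) (α × β) ℂ) :
    Matrix β β ℂ :=
  fun b b' => ∑ a, S (a, b) (a, b')

/-- Partial trace over the second (last) tensor factor. -/
def ptrRight {α β : Type*} [Fintype β] (S : Matrix (α × β) (α × β) ℂ) :
    Matrix α α ℂ :=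
  fun a a' => ∑ b, S (a, b) (a', b)

/-- `(|U⟩⟩⟨⟨U|)^{⊗k}`, where the `j`-th copy acts on the `j`-th factor of `I`
and the `j`-th factor of `O`; `(ℂ^d)^{⊗k}` is indexed by `Fin k → Fin d`. -/
def choiProjK {d : ℕ} (k : ℕ) (U : Matrix (Fin d) (Fin d) ℂ) :
    Matrix ((Fin k → Fin d) × (Fin k → Fin d)) ((Fin k → Fin d) × (Fin k → Fin d)) ℂ :=
  fun x y => ∏ j, choiProj U (x.1 j, x.2 j) (y.1 j, y.2 j)

/-- Action `S ⋆ U^{⊗k} := Tr_{IO}[ S · ((|U̅⟩⟩⟨⟨U̅|)^{⊗k}_{IO} ⊗ 1_F) ]` of a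
parallel `k`-call supermap on the unitary channel given by `U`. -/
def actK {d k : ℕ}
    (S : Matrix (((Fin k → Fin d) × (Fin k → Fin d)) × Fin d)
        (((Fin k → Fin d) × (Fin k → Fin d)) × Fin d) ℂ)
    (U : Matrix (Fin d) (Fin d) ℂ) : Matrix (Fin d) (Fin d) ℂ :=
  ptrLeft (S * (choiProjK k (mconj U) ⊗ₖ (1 : Matrix (Fin d) (Fin d) ℂ)))

/-- A parallel `k`-call probabilistic protocol: `0 ≤ S ≤ S_ch` with
`Tr_F(S_ch) = σ ⊗ 1_O`, `σ ≥ 0` on `(ℂ^d)^{⊗k}`, `Tr σ = 1`. -/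
def IsProtocolK {d k : ℕ}
    (S Sch : Matrix (((Fin k → Fin d) × (Fin k → Fin d)) × Fin d)
        (((Fin k → Fin d) × (Fin k → Fin d)) × Fin d) ℂ) : Prop :=
  S.PosSemidef ∧ (Sch - S).PosSemidef ∧
    ∃ σ : Matrix (Fin k → Fin d) (Fin k → Fin d) ℂ, σ.PosSemidef ∧ σ.trace = 1 ∧
      ptrRight Sch = σ ⊗ₖ (1 : Matrix (Fin k → Fin d) (Fin k → Fin d) ℂ)

/-- `U^{⊗k}` on `(ℂ^d)^{⊗k}` (indexed by `Fin k → Fin d`). -/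
def UkMat {d : ℕ} (k : ℕ) (U : Matrix (Fin d) (Fin d) ℂ) :
    Matrix (Fin k → Fin d) (Fin k → Fin d) ℂ :=
  fun i i' => ∏ j, U (i j) (i' j)

/-- The symmetry operator `U^{⊗k}_I ⊗ 1_O ⊗ U̅_F`. -/
def symTrans {d : ℕ} (k : ℕ) (U : Matrix (Fin d) (Fin d) ℂ) :
    Matrix (((Fin k → Fin d) × (Fin k → Fin d)) × Fin d)
      (((Fin k → Fin d) × (Fin k → Fin d)) × Fin d) ℂ :=
  (UkMat k U ⊗ₖ (1 : Matrix (Fin k → Fin d) (Fin k → Fin d) ℂ)) ⊗ₖ mconj U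


open MeasureTheory TopologicalSpace

attribute [local instance] Matrix.normedAddCommGroup Matrix.normedSpace

instance matrixContinuousENorm {m n : Type*} [Fintype m] [Fintype n] :
    ContinuousENorm (Matrix m n ℂ) :=
  SeminormedAddGroup.toContinuousENorm

namespace CovAux

variable {d : ℕ}

lemma star_mem_SU {A : Matrix (Fin d) (Fin d) ℂ} (h : A ∈ Matrix.specialUnitaryGroup (Fin d) ℂ) :
    star A ∈ Matrix.specialUnitaryGroup (Fin d) ℂ := by
  rw [Matrix.mem_specialUnitaryGroup_iff] at h ⊢
  refine ⟨Unitary.star_mem h.1, ?_⟩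
  rw [Matrix.star_eq_conjTranspose, Matrix.det_conjTranspose, h.2]
  simp

instance : Group ↥(Matrix.specialUnitaryGroup (Fin d) ℂ) :=
  { (inferInstance : Monoid ↥(Matrix.specialUnitaryGroup (Fin d) ℂ)) with
    inv := fun A => ⟨star A.1, star_mem_SU A.2⟩
    inv_mul_cancel := fun A => Subtype.ext
      (show star A.1 * A.1 = 1 from ((Unitary.mem_iff).mp A.2.1).1) }

lemma SU_coe_inv (A : ↥(Matrix.specialUnitaryGroup (Fin d) ℂ)) :
    ((A⁻¹ : ↥(Matrix.specialUnitaryGroup (Fin d) ℂ)) : Matrix (Fin d) (Fin d) ℂ) = star (A : Matrix (Fin d) (Fin d) ℂ) := rfl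

instance : IsTopologicalGroup ↥(Matrix.specialUnitaryGroup (Fin d) ℂ) where
  continuous_mul := by
    apply Continuous.subtype_mk
    exact (continuous_subtype_val.comp continuous_fst).matrix_mul
      (continuous_subtype_val.comp continuous_snd)
  continuous_inv := by
    apply Continuous.subtype_mk
    exact continuous_subtype_val.star

instance : Nonempty ↥(Matrix.specialUnitaryGroup (Fin d) ℂ) := ⟨1⟩

instance : CompactSpace ↥(Matrix.specialUnitaryGroup (Fin d) ℂ) := by
  suffices hc : IsCompact (Matrix.specialUnitaryGroup (Fin d) ℂ : Set (Matrix (Fin d) (Fin d) ℂ)) from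
    isCompact_iff_compactSpace.mp hc
  haveI : ProperSpace (Matrix (Fin d) (Fin d) ℂ) := FiniteDimensional.proper ℂ _
  apply Metric.isCompact_of_isClosed_isBounded
  · have : (Matrix.specialUnitaryGroup (Fin d) ℂ : Set (Matrix (Fin d) (Fin d) ℂ)) =
        {A | star A * A = 1} ∩ {A | A * star A = 1} ∩ {A | A.det = 1} := by
      ext A
      simp only [SetLike.mem_coe, Matrix.mem_specialUnitaryGroup_iff, Set.mem_inter_iff,
        Set.mem_setOf_eq, Unitary.mem_iff]
    rw [this]
    refine (IsClosed.inter ?_ ?_).inter ?_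
    · exact isClosed_eq (continuous_id.star.matrix_mul continuous_id) continuous_const
    · exact isClosed_eq (continuous_id.matrix_mul continuous_id.star) continuous_const
    · exact isClosed_eq continuous_id.matrix_det continuous_const
  · apply Bornology.IsBounded.subset (Metric.isBounded_closedBall (x := (0 : Matrix (Fin d) (Fin d) ℂ)) (r := 1))
    intro A hA
    rw [Metric.mem_closedBall, dist_zero_right]
    rw [Matrix.norm_le_iff (by norm_num)]
    intro i j
    exact entry_norm_bound_of_unitary (by exact hA.1) i j

instance : MeasurableSpace ↥(Matrix.specialUnitaryGroup (Fin d) ℂ) := borel _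
instance : BorelSpace ↥(Matrix.specialUnitaryGroup (Fin d) ℂ) := ⟨rfl⟩

abbrev haarSU (d : ℕ) : Measure ↥(Matrix.specialUnitaryGroup (Fin d) ℂ) :=
  Measure.haarMeasure ⊤

instance : IsProbabilityMeasure (haarSU d) :=
  ⟨by rw [← PositiveCompacts.coe_top (α := ↥(Matrix.specialUnitaryGroup (Fin d) ℂ))]
      exact Measure.haarMeasure_self⟩

end CovAux

namespace CovAux

variable {d k : ℕ}

lemma UkMat_mul (U V : Matrix (Fin d) (Fin d) ℂ) :
    UkMat k (U * V) = UkMat k U * UkMat k V := by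
  ext i i'
  simp only [UkMat, Matrix.mul_apply]
  rw [Finset.prod_univ_sum (t := fun _ => (Finset.univ : Finset (Fin d)))
    (f := fun j m => U (i j) m * V m (i' j)), Fintype.piFinset_univ]
  exact Finset.sum_congr rfl fun g _ => Finset.prod_mul_distrib

lemma UkMat_one : UkMat k (1 : Matrix (Fin d) (Fin d) ℂ) = 1 := by
  ext i i'
  by_cases h : i = i'
  · subst h
    simp [UkMat, Matrix.one_apply]
  · obtain ⟨j, hj⟩ := Function.ne_iff.mp h
    rw [Matrix.one_apply_ne h]
    exact Finset.prod_eq_zero (Finset.mem_univ j) (Matrix.one_apply_ne hj)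

lemma UkMat_conjT (U : Matrix (Fin d) (Fin d) ℂ) : (UkMat k U)ᴴ = UkMat k Uᴴ := by
  ext i i'
  simp only [UkMat, Matrix.conjTranspose_apply]
  rw [show star (∏ j, U (i' j) (i j)) = (starRingEnd ℂ) (∏ j, U (i' j) (i j)) from rfl,
    map_prod]
  rfl

lemma mconj_mul (U V : Matrix (Fin d) (Fin d) ℂ) : mconj (U * V) = mconj U * mconj V :=
  Matrix.map_mul

lemma mconj_one : mconj (1 : Matrix (Fin d) (Fin d) ℂ) = 1 := by
  simp [mconj]

lemma mconj_conjT (U : Matrix (Fin d) (Fin d) ℂ) : (mconj U)ᴴ = Uᵀ := by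
  ext i j
  simp [mconj, Matrix.conjTranspose_apply]

lemma mconj_of_conjT (U : Matrix (Fin d) (Fin d) ℂ) : mconj Uᴴ = Uᵀ := by
  ext i j
  simp [mconj, Matrix.conjTranspose_apply]

lemma kron_conjT {α β : Type*} (A : Matrix α α ℂ) (B : Matrix β β ℂ) :
    (A ⊗ₖ B)ᴴ = Aᴴ ⊗ₖ Bᴴ := by
  ext x y
  cases x; cases y
  simp [Matrix.conjTranspose_apply, Matrix.kroneckerMap_apply, star_mul']

lemma symTrans_mul (U V : Matrix (Fin d) (Fin d) ℂ) :
    symTrans k (U * V) = symTrans k U * symTrans k V := by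
  unfold symTrans
  simp only [UkMat_mul, mconj_mul, ← Matrix.mul_kronecker_mul, Matrix.one_mul]

lemma symTrans_one : symTrans k (1 : Matrix (Fin d) (Fin d) ℂ) = 1 := by
  unfold symTrans
  rw [UkMat_one, mconj_one, Matrix.one_kronecker_one, Matrix.one_kronecker_one]

lemma symTrans_conjT (U : Matrix (Fin d) (Fin d) ℂ) :
    (symTrans k U)ᴴ = symTrans k Uᴴ := by
  unfold symTrans
  rw [kron_conjT, kron_conjT, UkMat_conjT, Matrix.conjTranspose_one, mconj_conjT, ← mconj_of_conjT]


section Mini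

variable {α β γ : Type*} [Fintype α] [Fintype β] [DecidableEq α] [DecidableEq β]

lemma one_kron_mul_apply (B : Matrix β β ℂ) (M : Matrix (α × β) γ ℂ) [Fintype γ]
    (a : α) (b : β) (y : γ) :
    (((1 : Matrix α α ℂ) ⊗ₖ B) * M) (a, b) y = ∑ f, B b f * M (a, f) y := by
  rw [Matrix.mul_apply, Fintype.sum_prod_type]
  simp [Matrix.one_apply, ite_mul, zero_mul]

lemma mul_one_kron_apply (C : Matrix β β ℂ) (M : Matrix γ (α × β) ℂ) [Fintype γ]
    (x : γ) (a : α) (b : β) :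
    (M * ((1 : Matrix α α ℂ) ⊗ₖ C)) x (a, b) = ∑ f, M x (a, f) * C f b := by
  rw [Matrix.mul_apply, Fintype.sum_prod_type]
  simp [Matrix.one_apply, ite_mul, zero_mul, mul_ite, mul_zero]

lemma kron_one_mul_apply [DecidableEq β] (P : Matrix α α ℂ) (M : Matrix (α × β) γ ℂ) [Fintype γ]
    (a : α) (b : β) (y : γ) :
    ((P ⊗ₖ (1 : Matrix β β ℂ)) * M) (a, b) y = ∑ a', P a a' * M (a', b) y := by
  rw [Matrix.mul_apply, Fintype.sum_prod_type]
  simp [Matrix.one_apply, ite_mul, zero_mul, mul_ite, mul_zero]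

lemma mul_kron_one_apply (Q : Matrix α α ℂ) (M : Matrix γ (α × β) ℂ) [Fintype γ]
    (x : γ) (a : α) (b : β) :
    (M * (Q ⊗ₖ (1 : Matrix β β ℂ))) x (a, b) = ∑ a', M x (a', b) * Q a' a := by
  rw [Matrix.mul_apply, Fintype.sum_prod_type]
  simp [Matrix.one_apply, ite_mul, zero_mul, mul_ite, mul_zero]

lemma sum3 {A B C : Type*} [Fintype A] [Fintype B] [Fintype C] (f : A → B → C → ℂ) :
    (∑ a, ∑ b, ∑ c, f a b c) = ∑ b, ∑ c, ∑ a, f a b c := by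
  rw [Finset.sum_comm]
  exact Finset.sum_congr rfl fun _ _ => Finset.sum_comm

lemma sum3r {A B C : Type*} [Fintype A] [Fintype B] [Fintype C] (f : A → B → C → ℂ) :
    (∑ a, ∑ b, ∑ c, f a b c) = ∑ c, ∑ b, ∑ a, f a b c := by
  rw [sum3]
  exact Finset.sum_comm

lemma ptrLeft_one_kron_sandwich (B C : Matrix β β ℂ) (M : Matrix (α × β) (α × β) ℂ) :
    ptrLeft (((1 : Matrix α α ℂ) ⊗ₖ B) * M * ((1 : Matrix α α ℂ) ⊗ₖ C))
      = B * ptrLeft M * C := by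
  ext b b'
  simp only [ptrLeft, mul_one_kron_apply, one_kron_mul_apply]
  simp only [Matrix.mul_apply, ptrLeft, ptrRight, Finset.mul_sum, Finset.sum_mul]
  rw [sum3 (f := fun a f2 f1 => B b f1 * M (a, f1) (a, f2) * C f2 b')]

lemma ptrLeft_kron_one_sandwich (P Q : Matrix α α ℂ) (M : Matrix (α × β) (α × β) ℂ) :
    ptrLeft ((P ⊗ₖ (1 : Matrix β β ℂ)) * M * (Q ⊗ₖ (1 : Matrix β β ℂ)))
      = ptrLeft (M * ((Q * P) ⊗ₖ (1 : Matrix β β ℂ))) := by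
  ext b b'
  simp only [ptrLeft, mul_kron_one_apply, kron_one_mul_apply]
  simp only [Matrix.mul_apply, ptrLeft, ptrRight, Finset.mul_sum, Finset.sum_mul]
  rw [sum3r (f := fun a a2 a1 => P a a1 * M (a1, b) (a2, b') * Q a2 a)]
  exact Finset.sum_congr rfl fun a1 _ => Finset.sum_congr rfl fun a2 _ =>
    Finset.sum_congr rfl fun a _ => by ring

lemma ptrRight_kron_one_sandwich (P Q : Matrix α α ℂ) (M : Matrix (α × β) (α × β) ℂ) :
    ptrRight ((P ⊗ₖ (1 : Matrix β β ℂ)) * M * (Q ⊗ₖ (1 : Matrix β β ℂ)))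
      = P * ptrRight M * Q := by
  ext a a'
  simp only [ptrRight, mul_kron_one_apply, kron_one_mul_apply]
  simp only [Matrix.mul_apply, ptrLeft, ptrRight, Finset.mul_sum, Finset.sum_mul]
  rw [sum3 (f := fun b a2 a1 => P a a1 * M (a1, b) (a2, b) * Q a2 a')]

lemma ptrRight_one_kron_sandwich (B C : Matrix β β ℂ) (M : Matrix (α × β) (α × β) ℂ) :
    ptrRight (((1 : Matrix α α ℂ) ⊗ₖ B) * M * ((1 : Matrix α α ℂ) ⊗ₖ C))
      = ptrRight (M * ((1 : Matrix α α ℂ) ⊗ₖ (C * B))) := by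
  ext a a'
  simp only [ptrRight, mul_one_kron_apply, one_kron_mul_apply]
  simp only [Matrix.mul_apply, ptrLeft, ptrRight, Finset.mul_sum, Finset.sum_mul]
  rw [sum3r (f := fun b f2 f1 => B b f1 * M (a, f1) (a', f2) * C f2 b)]
  exact Finset.sum_congr rfl fun f1 _ => Finset.sum_congr rfl fun f2 _ =>
    Finset.sum_congr rfl fun b _ => by ring

end Mini

variable {d k : ℕ}

lemma choiProjK_eq_outer (W : Matrix (Fin d) (Fin d) ℂ) :
    choiProjK k W = outer (fun x : (Fin k → Fin d) × (Fin k → Fin d) => ∏ j, W (x.2 j) (x.1 j)) := by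
  ext x y
  simp only [choiProjK, choiProj, outer, Matrix.vecMulVec_apply, choiVec, Pi.star_apply,
    star_prod]
  rw [← Finset.prod_mul_distrib]

lemma conj_outer {n : Type*} [Fintype n] (Q : Matrix n n ℂ) (v : n → ℂ) :
    Qᴴ * outer v * Q = outer (Qᴴ *ᵥ v) := by
  ext x y
  simp only [outer, Matrix.mul_apply, Matrix.vecMulVec_apply, Matrix.mulVec, dotProduct,
    Pi.star_apply, star_sum, star_mul', star_star, Matrix.conjTranspose_apply,
    Finset.mul_sum, Finset.sum_mul]
  exact Finset.sum_congr rfl fun a _ => Finset.sum_congr rfl fun b _ => by ring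

lemma kron_mulVec_choi (U V : Matrix (Fin d) (Fin d) ℂ) :
    (UkMat k Vᴴ ⊗ₖ (1 : Matrix (Fin k → Fin d) (Fin k → Fin d) ℂ)) *ᵥ
        (fun x : (Fin k → Fin d) × (Fin k → Fin d) => ∏ j, (mconj U) (x.2 j) (x.1 j))
      = fun x => ∏ j, (mconj (U * V)) (x.2 j) (x.1 j) := by
  funext x
  rw [Matrix.mulVec, dotProduct, Fintype.sum_prod_type]
  simp only [Matrix.kroneckerMap_apply, Matrix.one_apply, mul_ite, mul_zero, mul_one,
    ite_mul, zero_mul, Finset.sum_ite_eq, Finset.mem_univ, if_true]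
  have : ∀ y1 : Fin k → Fin d,
      UkMat k Vᴴ x.1 y1 * (∏ j, mconj U (x.2 j) (y1 j))
        = ∏ j, (Vᴴ (x.1 j) (y1 j) * mconj U (x.2 j) (y1 j)) := by
    intro y1
    rw [UkMat, ← Finset.prod_mul_distrib]
  simp only [this]
  have h2 : (∏ j, (∑ m, Vᴴ (x.1 j) m * mconj U (x.2 j) m))
      = ∑ g : Fin k → Fin d, ∏ j, Vᴴ (x.1 j) (g j) * mconj U (x.2 j) (g j) := by
    rw [Finset.prod_univ_sum (t := fun _ => (Finset.univ : Finset (Fin d)))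
      (f := fun j m => Vᴴ (x.1 j) m * mconj U (x.2 j) m), Fintype.piFinset_univ]
  rw [← h2]
  refine Finset.prod_congr rfl fun j _ => ?_
  simp only [mconj, Matrix.map_apply, Matrix.conjTranspose_apply, Matrix.mul_apply, map_sum]
  exact Finset.sum_congr rfl fun m _ => by rw [_root_.map_mul]; exact mul_comm _ _

lemma conj_choiProjK (U V : Matrix (Fin d) (Fin d) ℂ) :
    (UkMat k V ⊗ₖ (1 : Matrix (Fin k → Fin d) (Fin k → Fin d) ℂ))ᴴ
        * choiProjK k (mconj U)
        * (UkMat k V ⊗ₖ (1 : Matrix (Fin k → Fin d) (Fin k → Fin d) ℂ))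
      = choiProjK k (mconj (U * V)) := by
  rw [choiProjK_eq_outer, choiProjK_eq_outer, conj_outer, kron_conjT, Matrix.conjTranspose_one,
    UkMat_conjT, kron_mulVec_choi]


lemma symTrans_conjT_mul_self {U : Matrix (Fin d) (Fin d) ℂ} (hUU : Uᴴ * U = 1) :
    (symTrans k U)ᴴ * symTrans k U = 1 := by
  rw [symTrans_conjT, ← symTrans_mul, hUU, symTrans_one]

lemma mconj_mul_transpose {V : Matrix (Fin d) (Fin d) ℂ} (h : V * Vᴴ = 1) :
    mconj V * Vᵀ = 1 := by
  rw [← mconj_of_conjT, ← mconj_mul, h, mconj_one]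

lemma transpose_mul_mconj {V : Matrix (Fin d) (Fin d) ℂ} (h : Vᴴ * V = 1) :
    (mconj V)ᴴ * mconj V = 1 := by
  rw [mconj_conjT, ← mconj_of_conjT, ← mconj_mul, h, mconj_one]

lemma symTrans_factor (V : Matrix (Fin d) (Fin d) ℂ) :
    symTrans k V = ((UkMat k V ⊗ₖ (1 : Matrix (Fin k → Fin d) (Fin k → Fin d) ℂ))
        ⊗ₖ (1 : Matrix (Fin d) (Fin d) ℂ))
      * ((1 : Matrix ((Fin k → Fin d) × (Fin k → Fin d)) ((Fin k → Fin d) × (Fin k → Fin d)) ℂ)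
        ⊗ₖ mconj V) := by
  unfold symTrans
  rw [← Matrix.mul_kronecker_mul, Matrix.mul_one, Matrix.one_mul]

lemma symTrans_factor' (V : Matrix (Fin d) (Fin d) ℂ) :
    (symTrans k V)ᴴ = ((1 : Matrix ((Fin k → Fin d) × (Fin k → Fin d)) ((Fin k → Fin d) × (Fin k → Fin d)) ℂ)
        ⊗ₖ (mconj V)ᴴ)
      * (((UkMat k V ⊗ₖ (1 : Matrix (Fin k → Fin d) (Fin k → Fin d) ℂ))ᴴ)
        ⊗ₖ (1 : Matrix (Fin d) (Fin d) ℂ)) := by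
  unfold symTrans
  rw [kron_conjT, ← Matrix.mul_kronecker_mul, Matrix.mul_one, Matrix.one_mul]

lemma actK_conj (S : Matrix (((Fin k → Fin d) × (Fin k → Fin d)) × Fin d)
      (((Fin k → Fin d) × (Fin k → Fin d)) × Fin d) ℂ)
    (U V : Matrix (Fin d) (Fin d) ℂ) :
    actK (symTrans k V * S * (symTrans k V)ᴴ) U = mconj V * actK S (U * V) * (mconj V)ᴴ := by
  set P : Matrix ((Fin k → Fin d) × (Fin k → Fin d)) ((Fin k → Fin d) × (Fin k → Fin d)) ℂ :=
    UkMat k V ⊗ₖ (1 : Matrix (Fin k → Fin d) (Fin k → Fin d) ℂ) with hPdef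
  set B : Matrix (Fin d) (Fin d) ℂ := mconj V with hBdef
  set N := choiProjK k (mconj U) with hNdef
  unfold actK
  have hmerge : ((Pᴴ ⊗ₖ (1 : Matrix (Fin d) (Fin d) ℂ)) * (N ⊗ₖ (1 : Matrix (Fin d) (Fin d) ℂ)))
      = (Pᴴ * N) ⊗ₖ (1 : Matrix (Fin d) (Fin d) ℂ) := by
    rw [← Matrix.mul_kronecker_mul, Matrix.one_mul]
  have hKey : symTrans k V * S * (symTrans k V)ᴴ * (N ⊗ₖ (1 : Matrix (Fin d) (Fin d) ℂ))
      = (P ⊗ₖ (1 : Matrix (Fin d) (Fin d) ℂ))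
        * (((1 : Matrix ((Fin k → Fin d) × (Fin k → Fin d)) ((Fin k → Fin d) × (Fin k → Fin d)) ℂ) ⊗ₖ B) * S
          * ((1 : Matrix ((Fin k → Fin d) × (Fin k → Fin d)) ((Fin k → Fin d) × (Fin k → Fin d)) ℂ) ⊗ₖ Bᴴ))
        * ((Pᴴ * N) ⊗ₖ (1 : Matrix (Fin d) (Fin d) ℂ)) := by
    rw [symTrans_factor', symTrans_factor, ← hmerge]
    noncomm_ring
  rw [hKey, ptrLeft_kron_one_sandwich]
  have hC : Pᴴ * N * P = choiProjK k (mconj (U * V)) := by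
    rw [hPdef, hNdef]
    exact conj_choiProjK U V
  rw [hC]
  set C' := choiProjK k (mconj (U * V)) with hC'def
  have hComm : ((1 : Matrix ((Fin k → Fin d) × (Fin k → Fin d)) ((Fin k → Fin d) × (Fin k → Fin d)) ℂ) ⊗ₖ Bᴴ)
        * (C' ⊗ₖ (1 : Matrix (Fin d) (Fin d) ℂ))
      = (C' ⊗ₖ (1 : Matrix (Fin d) (Fin d) ℂ))
        * ((1 : Matrix ((Fin k → Fin d) × (Fin k → Fin d)) ((Fin k → Fin d) × (Fin k → Fin d)) ℂ) ⊗ₖ Bᴴ) := by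
    rw [← Matrix.mul_kronecker_mul, ← Matrix.mul_kronecker_mul]
    simp only [Matrix.one_mul, Matrix.mul_one]
  have hKey2 : ((1 : Matrix ((Fin k → Fin d) × (Fin k → Fin d)) ((Fin k → Fin d) × (Fin k → Fin d)) ℂ) ⊗ₖ B) * S
        * ((1 : Matrix ((Fin k → Fin d) × (Fin k → Fin d)) ((Fin k → Fin d) × (Fin k → Fin d)) ℂ) ⊗ₖ Bᴴ)
        * (C' ⊗ₖ (1 : Matrix (Fin d) (Fin d) ℂ))
      = ((1 : Matrix ((Fin k → Fin d) × (Fin k → Fin d)) ((Fin k → Fin d) × (Fin k → Fin d)) ℂ) ⊗ₖ B)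
        * (S * (C' ⊗ₖ (1 : Matrix (Fin d) (Fin d) ℂ)))
        * ((1 : Matrix ((Fin k → Fin d) × (Fin k → Fin d)) ((Fin k → Fin d) × (Fin k → Fin d)) ℂ) ⊗ₖ Bᴴ) := by
    rw [mul_assoc, mul_assoc, hComm, ← mul_assoc, ← mul_assoc]
    noncomm_ring
  rw [hKey2, ptrLeft_one_kron_sandwich]

lemma ptrRight_symTrans_conj (M : Matrix (((Fin k → Fin d) × (Fin k → Fin d)) × Fin d)
      (((Fin k → Fin d) × (Fin k → Fin d)) × Fin d) ℂ)
    {V : Matrix (Fin d) (Fin d) ℂ} (hV : (mconj V)ᴴ * mconj V = 1) :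
    ptrRight (symTrans k V * M * (symTrans k V)ᴴ)
      = (UkMat k V ⊗ₖ (1 : Matrix (Fin k → Fin d) (Fin k → Fin d) ℂ)) * ptrRight M
        * (UkMat k V ⊗ₖ (1 : Matrix (Fin k → Fin d) (Fin k → Fin d) ℂ))ᴴ := by
  set P : Matrix ((Fin k → Fin d) × (Fin k → Fin d)) ((Fin k → Fin d) × (Fin k → Fin d)) ℂ :=
    UkMat k V ⊗ₖ (1 : Matrix (Fin k → Fin d) (Fin k → Fin d) ℂ) with hPdef
  set B : Matrix (Fin d) (Fin d) ℂ := mconj V with hBdef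
  have hKey : symTrans k V * M * (symTrans k V)ᴴ
      = (P ⊗ₖ (1 : Matrix (Fin d) (Fin d) ℂ))
        * (((1 : Matrix ((Fin k → Fin d) × (Fin k → Fin d)) ((Fin k → Fin d) × (Fin k → Fin d)) ℂ) ⊗ₖ B) * M
          * ((1 : Matrix ((Fin k → Fin d) × (Fin k → Fin d)) ((Fin k → Fin d) × (Fin k → Fin d)) ℂ) ⊗ₖ Bᴴ))
        * (Pᴴ ⊗ₖ (1 : Matrix (Fin d) (Fin d) ℂ)) := by
    rw [symTrans_factor', symTrans_factor]
    noncomm_ring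
  rw [hKey, ptrRight_kron_one_sandwich, ptrRight_one_kron_sandwich, hV,
    Matrix.one_kronecker_one, Matrix.mul_one]

lemma target_conj {V : Matrix (Fin d) (Fin d) ℂ} (hV2 : mconj V * Vᵀ = 1)
    (U : Matrix (Fin d) (Fin d) ℂ) (ψ : Fin d → ℂ) (p : ℝ) :
    mconj V * ((p : ℂ) • ((U * V)ᵀ * outer ψ * mconj (U * V))) * (mconj V)ᴴ
      = (p : ℂ) • (Uᵀ * outer ψ * mconj U) := by
  rw [Matrix.transpose_mul, mconj_mul, mconj_conjT, Matrix.mul_smul, Matrix.smul_mul]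
  congr 1
  have h : mconj V * (Vᵀ * Uᵀ * outer ψ * (mconj U * mconj V)) * Vᵀ
      = (mconj V * Vᵀ) * Uᵀ * outer ψ * mconj U * (mconj V * Vᵀ) := by noncomm_ring
  rw [h, hV2, Matrix.one_mul, Matrix.mul_one]

end CovAux


-- ptrRight linear map and related
namespace CovAux2

def entryLM {n m : Type*} (x : n) (y : m) : Matrix n m ℂ →ₗ[ℂ] ℂ where
  toFun M := M x y
  map_add' _ _ := rfl
  map_smul' _ _ := rfl

@[simp] lemma entryLM_apply {n m : Type*} (x : n) (y : m) (M : Matrix n m ℂ) :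
    entryLM x y M = M x y := rfl

def quadLM {n : Type*} [Fintype n] (v : n → ℂ) : Matrix n n ℂ →ₗ[ℂ] ℂ where
  toFun M := star v ⬝ᵥ M *ᵥ v
  map_add' M N := by simp [Matrix.add_mulVec, dotProduct_add]
  map_smul' c M := by simp [Matrix.smul_mulVec, dotProduct_smul]

@[simp] lemma quadLM_apply {n : Type*} [Fintype n] (v : n → ℂ) (M : Matrix n n ℂ) :
    quadLM v M = star v ⬝ᵥ M *ᵥ v := rfl

def ptrLeftLM {α β : Type*} [Fintype α] : Matrix (α × β) (α × β) ℂ →ₗ[ℂ] Matrix β β ℂ where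
  toFun := ptrLeft
  map_add' M N := by ext b b'; simp [ptrLeft, Finset.sum_add_distrib]
  map_smul' c M := by ext b b'; simp [ptrLeft, Finset.mul_sum]

@[simp] lemma ptrLeftLM_apply {α β : Type*} [Fintype α] (M : Matrix (α × β) (α × β) ℂ) :
    ptrLeftLM M = ptrLeft M := rfl

def ptrRightLM {α β : Type*} [Fintype β] : Matrix (α × β) (α × β) ℂ →ₗ[ℂ] Matrix α α ℂ where
  toFun := ptrRight
  map_add' M N := by ext a a'; simp [ptrRight, Finset.sum_add_distrib]
  map_smul' c M := by ext a a'; simp [ptrRight, Finset.mul_sum]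

@[simp] lemma ptrRightLM_apply {α β : Type*} [Fintype β] (M : Matrix (α × β) (α × β) ℂ) :
    ptrRightLM M = ptrRight M := rfl

def mulRightLM {n m p : Type*} [Fintype m] (A : Matrix m p ℂ) :
    Matrix n m ℂ →ₗ[ℂ] Matrix n p ℂ where
  toFun M := M * A
  map_add' M N := Matrix.add_mul M N A
  map_smul' c M := Matrix.smul_mul c M A

@[simp] lemma mulRightLM_apply {n m p : Type*} [Fintype m] (A : Matrix m p ℂ)
    (M : Matrix n m ℂ) : mulRightLM A M = M * A := rfl

def mulLeftLM {n m p : Type*} [Fintype m] (A : Matrix n m ℂ) :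
    Matrix m p ℂ →ₗ[ℂ] Matrix n p ℂ where
  toFun M := A * M
  map_add' M N := Matrix.mul_add A M N
  map_smul' c M := Matrix.mul_smul A c M

@[simp] lemma mulLeftLM_apply {n m p : Type*} [Fintype m] (A : Matrix n m ℂ)
    (M : Matrix m p ℂ) : mulLeftLM A M = A * M := rfl

def traceLM {n : Type*} [Fintype n] : Matrix n n ℂ →ₗ[ℂ] ℂ where
  toFun := Matrix.trace
  map_add' := Matrix.trace_add
  map_smul' := Matrix.trace_smul

@[simp] lemma traceLM_apply {n : Type*} [Fintype n] (M : Matrix n n ℂ) :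
    traceLM M = M.trace := rfl

def kronOneLM {α β : Type*} [DecidableEq β] :
    Matrix α α ℂ →ₗ[ℂ] Matrix (α × β) (α × β) ℂ where
  toFun M := M ⊗ₖ (1 : Matrix β β ℂ)
  map_add' M N := Matrix.add_kronecker M N 1
  map_smul' c M := Matrix.smul_kronecker c M 1

@[simp] lemma kronOneLM_apply {α β : Type*} [DecidableEq β] (M : Matrix α α ℂ) :
    kronOneLM M = M ⊗ₖ (1 : Matrix β β ℂ) := rfl

lemma linearMap_integral_comm {E F : Type*} [NormedAddCommGroup E] [NormedSpace ℂ E]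
    [FiniteDimensional ℂ E] [NormedAddCommGroup F] [NormedSpace ℂ F] [CompleteSpace F]
    {X : Type*} [MeasurableSpace X] {μ : Measure X}
    (L : E →ₗ[ℂ] F) {f : X → E} (hf : Integrable f μ) :
    L (∫ x, f x ∂μ) = ∫ x, L (f x) ∂μ := by
  have h := (LinearMap.toContinuousLinearMap L).integral_comp_comm hf
  simpa using h.symm

lemma posSemidef_integral {n : Type*} [Fintype n] [DecidableEq n]
    {X : Type*} [MeasurableSpace X] {μ : Measure X}
    {f : X → Matrix n n ℂ} (hf : Integrable f μ) (hpos : ∀ x, (f x).PosSemidef) :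
    (∫ x, f x ∂μ).PosSemidef := by
  refine Matrix.PosSemidef.of_dotProduct_mulVec_nonneg ?_ ?_
  · ext i j
    rw [Matrix.conjTranspose_apply]
    have h1 := linearMap_integral_comm (entryLM j i) hf
    have h2 := linearMap_integral_comm (entryLM i j) hf
    simp only [entryLM_apply] at h1 h2
    rw [h1, h2, Complex.star_def, ← integral_conj]
    refine integral_congr_ae (Filter.Eventually.of_forall fun x => ?_)
    show star (f x j i) = f x i j
    rw [← Matrix.conjTranspose_apply, (hpos x).1]
  · intro v
    have h3 := linearMap_integral_comm (quadLM v) hf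
    simp only [quadLM_apply] at h3
    rw [h3]
    have hq : Integrable (fun x => star v ⬝ᵥ (f x) *ᵥ v) μ := by
      have h := (LinearMap.toContinuousLinearMap (quadLM v)).integrable_comp hf
      exact h
    have h4 := integral_re hq
    have h5 := integral_im hq
    simp only [RCLike.re_to_complex, RCLike.im_to_complex] at h4 h5
    rw [Complex.nonneg_iff]
    constructor
    · rw [← h4]
      exact integral_nonneg fun x => (Complex.nonneg_iff.mp ((hpos x).dotProduct_mulVec_nonneg v)).1
    · rw [← h5]
      rw [integral_congr_ae (Filter.Eventually.of_forall
        (fun x => ((Complex.nonneg_iff.mp ((hpos x).dotProduct_mulVec_nonneg v)).2).symm))]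
      simp

end CovAux2

/-- **Covariance without loss of performance (transposition).** Any parallel
`k`-call protocol implementing `U ↦ p·Uᵀ|ψ⟩⟨ψ|U̅` for all `U ∈ SU(d)` can be
replaced by one whose success element commutes with `U^{⊗k} ⊗ 1_O ⊗ U̅` for every
`U ∈ SU(d)`, achieving the same probability `p`. -/
theorem covariant_protocol_without_loss
    (d k : ℕ) (hd : 2 ≤ d) (hk : 1 ≤ k) (p : ℝ)
    (ψ : Fin d → ℂ) (hψ : star ψ ⬝ᵥ ψ = 1)
    (S Sch : Matrix (((Fin k → Fin d) × (Fin k → Fin d)) × Fin d)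
        (((Fin k → Fin d) × (Fin k → Fin d)) × Fin d) ℂ)
    (hprot : IsProtocolK S Sch)
    (htarget : ∀ U : Matrix (Fin d) (Fin d) ℂ, U ∈ Matrix.specialUnitaryGroup (Fin d) ℂ →
      actK S U = (p : ℂ) • (Uᵀ * outer ψ * mconj U)) :
    ∃ Sc Scch : Matrix (((Fin k → Fin d) × (Fin k → Fin d)) × Fin d)
        (((Fin k → Fin d) × (Fin k → Fin d)) × Fin d) ℂ,
      IsProtocolK Sc Scch ∧
      (∀ U : Matrix (Fin d) (Fin d) ℂ, U ∈ Matrix.specialUnitaryGroup (Fin d) ℂ →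
        actK Sc U = (p : ℂ) • (Uᵀ * outer ψ * mconj U)) ∧
      (∀ U : Matrix (Fin d) (Fin d) ℂ, U ∈ Matrix.specialUnitaryGroup (Fin d) ℂ →
        Sc * symTrans k U = symTrans k U * Sc) := by
  classical
  obtain ⟨hS, hdiff, σ, hσ, hσtr, hSch⟩ := hprot
  have hvcont : Continuous (fun V : ↥(Matrix.specialUnitaryGroup (Fin d) ℂ) =>
      (V : Matrix (Fin d) (Fin d) ℂ)) := continuous_subtype_val
  have hUkcont : Continuous (fun V : ↥(Matrix.specialUnitaryGroup (Fin d) ℂ) =>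
      UkMat k (V : Matrix (Fin d) (Fin d) ℂ)) := by
    refine continuous_matrix fun i i' => ?_
    show Continuous fun V : ↥(Matrix.specialUnitaryGroup (Fin d) ℂ) =>
      ∏ j, (V : Matrix (Fin d) (Fin d) ℂ) (i j) (i' j)
    exact continuous_finset_prod _ fun j _ => hvcont.matrix_elem _ _
  have hgcont : Continuous (fun V : ↥(Matrix.specialUnitaryGroup (Fin d) ℂ) =>
      symTrans k (V : Matrix (Fin d) (Fin d) ℂ)) := by
    refine continuous_matrix fun x y => ?_
    show Continuous fun V : ↥(Matrix.specialUnitaryGroup (Fin d) ℂ) =>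
      (UkMat k (V : Matrix (Fin d) (Fin d) ℂ) x.1.1 y.1.1
        * (1 : Matrix (Fin k → Fin d) (Fin k → Fin d) ℂ) x.1.2 y.1.2)
        * star ((V : Matrix (Fin d) (Fin d) ℂ) x.2 y.2)
    exact ((hUkcont.matrix_elem _ _).mul continuous_const).mul (hvcont.matrix_elem _ _).star
  have hTcont : ∀ M : Matrix (((Fin k → Fin d) × (Fin k → Fin d)) × Fin d)
      (((Fin k → Fin d) × (Fin k → Fin d)) × Fin d) ℂ,
      Continuous fun V : ↥(Matrix.specialUnitaryGroup (Fin d) ℂ) =>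
        symTrans k (V : Matrix (Fin d) (Fin d) ℂ) * M
          * (symTrans k (V : Matrix (Fin d) (Fin d) ℂ))ᴴ :=
    fun M => (hgcont.matrix_mul continuous_const).matrix_mul hgcont.matrix_conjTranspose
  have hTint : ∀ M : Matrix (((Fin k → Fin d) × (Fin k → Fin d)) × Fin d)
      (((Fin k → Fin d) × (Fin k → Fin d)) × Fin d) ℂ,
      Integrable (fun V : ↥(Matrix.specialUnitaryGroup (Fin d) ℂ) =>
        symTrans k (V : Matrix (Fin d) (Fin d) ℂ) * M
          * (symTrans k (V : Matrix (Fin d) (Fin d) ℂ))ᴴ) (CovAux.haarSU d) :=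
    fun M => (hTcont M).integrable_of_hasCompactSupport
      (IsCompact.of_isClosed_subset isCompact_univ (isClosed_tsupport _) (Set.subset_univ _))
  have hAint : Integrable (fun V : ↥(Matrix.specialUnitaryGroup (Fin d) ℂ) =>
      UkMat k (V : Matrix (Fin d) (Fin d) ℂ) * σ
        * (UkMat k (V : Matrix (Fin d) (Fin d) ℂ))ᴴ) (CovAux.haarSU d) :=
    ((hUkcont.matrix_mul continuous_const).matrix_mul
        hUkcont.matrix_conjTranspose).integrable_of_hasCompactSupport
      (IsCompact.of_isClosed_subset isCompact_univ (isClosed_tsupport _) (Set.subset_univ _))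
  have hmemU : ∀ V : ↥(Matrix.specialUnitaryGroup (Fin d) ℂ),
      (V : Matrix (Fin d) (Fin d) ℂ) * (V : Matrix (Fin d) (Fin d) ℂ)ᴴ = 1 ∧
        (V : Matrix (Fin d) (Fin d) ℂ)ᴴ * (V : Matrix (Fin d) (Fin d) ℂ) = 1 := by
    intro V
    have h := Unitary.mem_iff.mp V.2.1
    rw [Matrix.star_eq_conjTranspose] at h
    exact ⟨h.2, h.1⟩
  set Sc : Matrix (((Fin k → Fin d) × (Fin k → Fin d)) × Fin d)
      (((Fin k → Fin d) × (Fin k → Fin d)) × Fin d) ℂ :=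
    ∫ V, symTrans k (V : Matrix (Fin d) (Fin d) ℂ) * S
      * (symTrans k (V : Matrix (Fin d) (Fin d) ℂ))ᴴ ∂(CovAux.haarSU d) with hScdef
  set Scch : Matrix (((Fin k → Fin d) × (Fin k → Fin d)) × Fin d)
      (((Fin k → Fin d) × (Fin k → Fin d)) × Fin d) ℂ :=
    ∫ V, symTrans k (V : Matrix (Fin d) (Fin d) ℂ) * Sch
      * (symTrans k (V : Matrix (Fin d) (Fin d) ℂ))ᴴ ∂(CovAux.haarSU d) with hScchdef
  set σc : Matrix (Fin k → Fin d) (Fin k → Fin d) ℂ :=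
    ∫ V, UkMat k (V : Matrix (Fin d) (Fin d) ℂ) * σ
      * (UkMat k (V : Matrix (Fin d) (Fin d) ℂ))ᴴ ∂(CovAux.haarSU d) with hσcdef
  refine ⟨Sc, Scch, ⟨?_, ?_, σc, ?_, ?_, ?_⟩, ?_, ?_⟩
  · exact CovAux2.posSemidef_integral (hTint S) fun V => hS.mul_mul_conjTranspose_same _
  · have hsub : Scch - Sc = ∫ V, symTrans k (V : Matrix (Fin d) (Fin d) ℂ) * (Sch - S)
        * (symTrans k (V : Matrix (Fin d) (Fin d) ℂ))ᴴ ∂(CovAux.haarSU d) := by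
      rw [hScchdef, hScdef, ← integral_sub (hTint Sch) (hTint S)]
      refine integral_congr_ae (Filter.Eventually.of_forall fun V => ?_)
      show _ = _
      noncomm_ring
    rw [hsub]
    exact CovAux2.posSemidef_integral (hTint _) fun V => hdiff.mul_mul_conjTranspose_same _
  · exact CovAux2.posSemidef_integral hAint fun V => hσ.mul_mul_conjTranspose_same _
  · have h := CovAux2.linearMap_integral_comm CovAux2.traceLM hAint
    simp only [CovAux2.traceLM_apply] at h
    rw [← hσcdef] at h
    have hpt : ∀ V : ↥(Matrix.specialUnitaryGroup (Fin d) ℂ),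
        (UkMat k (V : Matrix (Fin d) (Fin d) ℂ) * σ
          * (UkMat k (V : Matrix (Fin d) (Fin d) ℂ))ᴴ).trace = (1 : ℂ) := by
      intro V
      rw [Matrix.trace_mul_cycle, CovAux.UkMat_conjT, ← CovAux.UkMat_mul, (hmemU V).2, CovAux.UkMat_one,
        Matrix.one_mul, hσtr]
    rw [h]
    simp only [hpt]
    simp [measure_univ]
  · have h := CovAux2.linearMap_integral_comm CovAux2.ptrRightLM (hTint Sch)
    simp only [CovAux2.ptrRightLM_apply] at h
    rw [← hScchdef] at h
    have hpt : ∀ V : ↥(Matrix.specialUnitaryGroup (Fin d) ℂ),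
        ptrRight (symTrans k (V : Matrix (Fin d) (Fin d) ℂ) * Sch
            * (symTrans k (V : Matrix (Fin d) (Fin d) ℂ))ᴴ)
          = (UkMat k (V : Matrix (Fin d) (Fin d) ℂ) * σ
              * (UkMat k (V : Matrix (Fin d) (Fin d) ℂ))ᴴ)
            ⊗ₖ (1 : Matrix (Fin k → Fin d) (Fin k → Fin d) ℂ) := by
      intro V
      rw [CovAux.ptrRight_symTrans_conj Sch (CovAux.transpose_mul_mconj (hmemU V).2), hSch,
        CovAux.kron_conjT, Matrix.conjTranspose_one, ← Matrix.mul_kronecker_mul,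
        ← Matrix.mul_kronecker_mul]
      simp only [Matrix.one_mul, Matrix.mul_one]
    rw [h]
    simp only [hpt]
    have h3 := CovAux2.linearMap_integral_comm (CovAux2.kronOneLM (β := Fin k → Fin d)) hAint
    simp only [CovAux2.kronOneLM_apply] at h3
    rw [← hσcdef] at h3
    exact h3.symm
  · intro U hU
    have hL := CovAux2.linearMap_integral_comm
      (CovAux2.ptrLeftLM.comp (CovAux2.mulRightLM
        (choiProjK k (mconj U) ⊗ₖ (1 : Matrix (Fin d) (Fin d) ℂ)))) (hTint S)
    simp only [LinearMap.comp_apply, CovAux2.mulRightLM_apply, CovAux2.ptrLeftLM_apply] at hL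
    rw [← hScdef] at hL
    have hpt : ∀ V : ↥(Matrix.specialUnitaryGroup (Fin d) ℂ),
        ptrLeft ((symTrans k (V : Matrix (Fin d) (Fin d) ℂ) * S
            * (symTrans k (V : Matrix (Fin d) (Fin d) ℂ))ᴴ)
          * (choiProjK k (mconj U) ⊗ₖ (1 : Matrix (Fin d) (Fin d) ℂ)))
          = (p : ℂ) • (Uᵀ * outer ψ * mconj U) := by
      intro V
      show actK (symTrans k (V : Matrix (Fin d) (Fin d) ℂ) * S
        * (symTrans k (V : Matrix (Fin d) (Fin d) ℂ))ᴴ) U = _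
      rw [CovAux.actK_conj, htarget _ (mul_mem hU V.2),
        CovAux.target_conj (CovAux.mconj_mul_transpose (hmemU V).1)]
    show actK Sc U = _
    rw [show actK Sc U = ∫ V, ptrLeft ((symTrans k (V : Matrix (Fin d) (Fin d) ℂ) * S
        * (symTrans k (V : Matrix (Fin d) (Fin d) ℂ))ᴴ)
        * (choiProjK k (mconj U) ⊗ₖ (1 : Matrix (Fin d) (Fin d) ℂ))) ∂(CovAux.haarSU d) from hL]
    simp only [hpt]
    simp [measure_univ]
  · intro W hW
    have h1 := CovAux2.linearMap_integral_comm (CovAux2.mulRightLM (symTrans k W)) (hTint S)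
    have h2 := CovAux2.linearMap_integral_comm (CovAux2.mulLeftLM (symTrans k W)) (hTint S)
    simp only [CovAux2.mulRightLM_apply, CovAux2.mulLeftLM_apply] at h1 h2
    rw [← hScdef] at h1 h2
    rw [h1, h2]
    have hWH : Wᴴ * W = 1 := by
      have h := Unitary.mem_iff.mp hW.1
      rw [Matrix.star_eq_conjTranspose] at h
      exact h.1
    have hinv := MeasureTheory.integral_mul_left_eq_self (μ := CovAux.haarSU d)
      (fun V : ↥(Matrix.specialUnitaryGroup (Fin d) ℂ) =>
        symTrans k (V : Matrix (Fin d) (Fin d) ℂ) * S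
          * (symTrans k (V : Matrix (Fin d) (Fin d) ℂ))ᴴ * symTrans k W)
      (⟨W, hW⟩ : ↥(Matrix.specialUnitaryGroup (Fin d) ℂ))
    rw [← hinv]
    refine integral_congr_ae (Filter.Eventually.of_forall fun V => ?_)
    have hcoe : (((⟨W, hW⟩ : ↥(Matrix.specialUnitaryGroup (Fin d) ℂ)) * V :
        ↥(Matrix.specialUnitaryGroup (Fin d) ℂ)) : Matrix (Fin d) (Fin d) ℂ)
        = W * (V : Matrix (Fin d) (Fin d) ℂ) := rfl
    show symTrans k (((⟨W, hW⟩ : ↥(Matrix.specialUnitaryGroup (Fin d) ℂ)) * V :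
        ↥(Matrix.specialUnitaryGroup (Fin d) ℂ)) : Matrix (Fin d) (Fin d) ℂ) * S
        * (symTrans k (((⟨W, hW⟩ : ↥(Matrix.specialUnitaryGroup (Fin d) ℂ)) * V :
          ↥(Matrix.specialUnitaryGroup (Fin d) ℂ)) : Matrix (Fin d) (Fin d) ℂ))ᴴ * symTrans k W
        = symTrans k W * (symTrans k (V : Matrix (Fin d) (Fin d) ℂ) * S
          * (symTrans k (V : Matrix (Fin d) (Fin d) ℂ))ᴴ)
    rw [hcoe, CovAux.symTrans_mul, Matrix.conjTranspose_mul]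
    have hO : (symTrans k W)ᴴ * symTrans k W = 1 := CovAux.symTrans_conjT_mul_self hWH
    calc symTrans k W * symTrans k (V : Matrix (Fin d) (Fin d) ℂ) * S
          * ((symTrans k (V : Matrix (Fin d) (Fin d) ℂ))ᴴ * (symTrans k W)ᴴ) * symTrans k W
        = symTrans k W * (symTrans k (V : Matrix (Fin d) (Fin d) ℂ) * S
            * (symTrans k (V : Matrix (Fin d) (Fin d) ℂ))ᴴ)
          * ((symTrans k W)ᴴ * symTrans k W) := by noncomm_ring
      _ = symTrans k W * (symTrans k (V : Matrix (Fin d) (Fin d) ℂ) * S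
            * (symTrans k (V : Matrix (Fin d) (Fin d) ℂ))ᴴ) := by
          rw [hO, Matrix.mul_one]
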